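/- There is a ticketed learning–unlearning scheme for the Count-to-Zero problem with space complexity (C_s = 1, C_t = O(log α⁻¹(m))): there exist a constant c > 0 and, for every m ∈ ℕ, an assignment of a one-bit auxiliary value and of tickets t_1, …, t_m, each ticket being a symbol from an alphabet of size at most c · α⁻¹(m)³, together with a function Unlearn taking a sub-multiset of presented tickets (and the auxiliary bit), such that for every I ⊆ [m], Unlearn applied to the multiset {t_i : i ∈ I} returns ⊥ if I = [m] and ⊤ if I ⊊ [m], and Unlearn applied to the empty request returns ⊥ exactly when m = 0. -/

import Mathlib

/-- The Ackermann-like hierarchy from the paper: `A r 1 = 2` for all `r ≥ 1`,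
`A 1 t = 2 * t` for `t ≥ 2`, and `A (r+1) t = A r (A (r+1) (t-1))` for `t ≥ 2`.
(The values at `t = 0` and `r = 0` are junk values, never used for `r, t ≥ 1`.) -/
def A : ℕ → ℕ → ℕ
  | _, 0 => 0
  | _, 1 => 2
  | 0, t + 2 => 2 * (t + 2)
  | 1, t + 2 => 2 * (t + 2)
  | r + 2, t + 2 => A (r + 1) (A (r + 2) (t + 1))

/-- The Ackermann function `α(t) = A_t(t)`. -/
def ackFn (t : ℕ) : ℕ := A t t

/-- The inverse-Ackermann function: the smallest `t` such that `n ≤ α(t)`. -/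
noncomputable def invAck (n : ℕ) : ℕ := sInf {t | n ≤ ackFn t}

/-! ### Auxiliary construction for the proof -/

def findNZ : List ℕ → Option (ℕ × ℕ × List ℕ)
  | [] => none
  | 0 :: t => (findNZ t).map fun p => (p.1 + 1, p.2)
  | (a+1) :: t => some (0, a, t)

def next (l : List ℕ) : List ℕ :=
  match l.reverse with
  | [] => []
  | y :: t =>
    match findNZ t with
    | some (e, a, q) => q.reverse ++ a :: (y+2) :: List.replicate e 0
    | none => List.replicate t.length 0 ++ (y - 1) :: 2 :: List.replicate t.length 0

def w (n : ℕ) : List ℕ := next^[n] [1]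

lemma findNZ_rep (e a : ℕ) (q : List ℕ) :
    findNZ (List.replicate e 0 ++ (a+1) :: q) = some (e, a, q) := by
  induction e with
  | zero => simp [findNZ]
  | succ e ih => simp [List.replicate_succ, findNZ, ih]

lemma findNZ_rep_none (e : ℕ) : findNZ (List.replicate e 0) = none := by
  induction e with
  | zero => simp [findNZ]
  | succ e ih => simp [List.replicate_succ, findNZ, ih]

lemma next_eq (z : List ℕ) (a e y : ℕ) :
    next (z ++ (a+1) :: (List.replicate e 0 ++ [y])) = z ++ a :: (y+2) :: List.replicate e 0 := by
  have h : (z ++ (a+1) :: (List.replicate e 0 ++ [y])).reverse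
      = y :: (List.replicate e 0 ++ (a+1) :: z.reverse) := by
    simp [List.reverse_append, List.reverse_replicate]
  rw [next, h]
  dsimp only
  rw [findNZ_rep]
  simp

lemma next_dead (k x : ℕ) :
    next (List.replicate k 0 ++ [x+1]) = List.replicate k 0 ++ x :: 2 :: List.replicate k 0 := by
  have h : (List.replicate k 0 ++ [x+1]).reverse = (x+1) :: List.replicate k 0 := by
    simp [List.reverse_append, List.reverse_replicate]
  rw [next, h]
  dsimp only
  rw [findNZ_rep_none]
  simp

lemma findNZ_none_shape {t : List ℕ} (h : findNZ t = none) : t = List.replicate t.length 0 := by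
  induction t with
  | nil => simp
  | cons x t ih =>
    match x, h with
    | 0, h =>
      simp only [findNZ, Option.map_eq_none_iff] at h
      rw [List.length_cons, List.replicate_succ]
      exact congrArg (0 :: ·) (ih h)
    | a+1, h => simp [findNZ] at h

lemma findNZ_some_shape {t : List ℕ} {e a q} (h : findNZ t = some (e, a, q)) :
    t = List.replicate e 0 ++ (a+1) :: q := by
  induction t generalizing e with
  | nil => simp [findNZ] at h
  | cons x t ih =>
    match x, h with
    | 0, h =>
      simp only [findNZ, Option.map_eq_some_iff] at h
      obtain ⟨p, hp, he⟩ := h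
      obtain ⟨e', a', q'⟩ := p
      cases he
      simp [List.replicate_succ, ih hp]
    | a'+1, h =>
      simp only [findNZ, Option.some.injEq] at h
      obtain ⟨rfl, rfl, rfl⟩ := h
      simp

/-- Every nonempty list is either "dead" (all mass in last coordinate) or has a last
nonzero non-final coordinate. -/
lemma next_cases (l : List ℕ) (hl : l ≠ []) :
    (∃ k y, l = List.replicate k 0 ++ [y]) ∨
    (∃ z a e y, l = z ++ (a+1) :: (List.replicate e 0 ++ [y])) := by
  obtain ⟨t', y, ht⟩ : ∃ t' y, l.reverse = y :: t' := by
    cases h : l.reverse with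
    | nil => exact absurd (by simpa using congrArg List.reverse h) hl
    | cons y t' => exact ⟨t', y, rfl⟩
  have hl' : l = t'.reverse ++ [y] := by
    have := congrArg List.reverse ht
    simpa using this
  cases h : findNZ t' with
  | none =>
    left
    exact ⟨t'.length, y, by rw [hl', findNZ_none_shape h]; simp [List.reverse_replicate]⟩
  | some p =>
    obtain ⟨e, a, q⟩ := p
    right
    refine ⟨q.reverse, a, e, y, ?_⟩
    rw [hl', findNZ_some_shape h]
    simp [List.reverse_append, List.reverse_replicate]

lemma w_succ (n : ℕ) : w (n+1) = next (w n) := Function.iterate_succ_apply' next n [1]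

lemma sum_next_move (z : List ℕ) (a e y : ℕ) :
    (next (z ++ (a+1) :: (List.replicate e 0 ++ [y]))).sum
      = (z ++ (a+1) :: (List.replicate e 0 ++ [y])).sum + 1 := by
  rw [next_eq]; simp [List.sum_append]; ring

lemma sum_next_dead (k x : ℕ) :
    (next (List.replicate k 0 ++ [x+1])).sum = (List.replicate k 0 ++ [x+1]).sum + 1 := by
  rw [next_dead]; simp [List.sum_append]

lemma w_ne_nil (n : ℕ) : w n ≠ [] := by
  induction n with
  | zero => simp [w]
  | succ n ih =>
    rw [w_succ]
    rcases next_cases (w n) ih with ⟨k, y, h⟩ | ⟨z, a, e, y, h⟩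
    · rcases Nat.eq_zero_or_pos y with rfl | hy
      · -- y = 0 : sum is 0; but show nonempty anyway: next of this shape
        rw [h]
        have : (0:ℕ) = 0 + 0 := rfl
        -- next (replicate k 0 ++ [0]) : use next_dead does not apply; compute directly
        have h2 : (List.replicate k 0 ++ [(0:ℕ)]).reverse = 0 :: List.replicate k 0 := by
          simp [List.reverse_append]
        rw [next, h2]
        dsimp only
        rw [findNZ_rep_none]
        simp
      · obtain ⟨x, rfl⟩ := Nat.exists_eq_add_of_le hy
        rw [h, show 1 + x = x + 1 by ring, next_dead]
        simp
    · rw [h, next_eq]; simp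

lemma w_sum (n : ℕ) : (w n).sum = n + 1 := by
  induction n with
  | zero => simp [w]
  | succ n ih =>
    rw [w_succ]
    rcases next_cases (w n) (w_ne_nil n) with ⟨k, y, h⟩ | ⟨z, a, e, y, h⟩
    · have hy : y = n + 1 := by rw [h] at ih; simpa [List.sum_append] using ih
      rw [h, hy, sum_next_dead]
      simp [List.sum_append]
    · rw [h] at ih ⊢
      rw [sum_next_move, ih]

lemma length_next_move (z : List ℕ) (a e y : ℕ) :
    (next (z ++ (a+1) :: (List.replicate e 0 ++ [y]))).length
      = (z ++ (a+1) :: (List.replicate e 0 ++ [y])).length := by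
  rw [next_eq]
  simp

lemma w_length_mono_succ (n : ℕ) : (w n).length ≤ (w (n+1)).length := by
  rw [w_succ]
  rcases next_cases (w n) (w_ne_nil n) with ⟨k, y, h⟩ | ⟨z, a, e, y, h⟩
  · have hy : y = n + 1 := by
      have := w_sum n
      rw [h] at this; simp [List.sum_append] at this; omega
    rw [h, hy, next_dead]
    simp
  · rw [h, length_next_move]

lemma w_length_mono {n n' : ℕ} (h : n ≤ n') : (w n).length ≤ (w n').length := by
  induction n' with
  | zero => simpa [Nat.le_zero.mp h]
  | succ m ih =>
    rcases Nat.lt_or_ge n (m+1) with h' | h'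
    · exact le_trans (ih (Nat.lt_succ_iff.mp h')) (w_length_mono_succ m)
    · have : n = m + 1 := le_antisymm h h'
      simp [this]

/-- coordinate of a count-vector -/
def coord (l : List ℕ) (j : ℕ) : ℕ := l.getD j 0

def LexGt (l l' : List ℕ) : Prop :=
  ∃ j, (∀ i < j, coord l i = coord l' i) ∧ coord l' j < coord l j

lemma LexGt.trans {l₁ l₂ l₃ : List ℕ} (h₁ : LexGt l₁ l₂) (h₂ : LexGt l₂ l₃) : LexGt l₁ l₃ := by
  obtain ⟨j₁, e₁, lt₁⟩ := h₁
  obtain ⟨j₂, e₂, lt₂⟩ := h₂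
  rcases lt_trichotomy j₁ j₂ with h | h | h
  · exact ⟨j₁, fun i hi => (e₁ i hi).trans (e₂ i (hi.trans h)),
      by rw [← e₂ j₁ h]; exact lt₁⟩
  · subst h
    exact ⟨j₁, fun i hi => (e₁ i hi).trans (e₂ i hi), lt₂.trans lt₁⟩
  · exact ⟨j₂, fun i hi => (e₁ i (hi.trans h)).trans (e₂ i hi),
      by rw [e₁ j₂ h]; exact lt₂⟩

lemma coord_append_left {z : List ℕ} {i : ℕ} (h : i < z.length) (l : List ℕ) :
    coord (z ++ l) i = coord z i := by
  simp [coord, List.getD_eq_getElem?_getD, List.getElem?_append, h]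

lemma coord_append_at (z : List ℕ) (x : ℕ) (l : List ℕ) :
    coord (z ++ x :: l) z.length = x := by
  simp [coord, List.getD_eq_getElem?_getD, List.getElem?_append_right (le_refl z.length)]

lemma coord_replicate_lt {k i : ℕ} (h : i < k) (l : List ℕ) :
    coord (List.replicate k 0 ++ l) i = 0 := by
  rw [coord_append_left (by simpa using h)]
  simp [coord, List.getD_eq_getElem?_getD, List.getElem?_replicate, if_pos h]

lemma lexGt_w_succ (n : ℕ) : LexGt (w n) (w (n+1)) := by
  rw [w_succ]
  rcases next_cases (w n) (w_ne_nil n) with ⟨k, y, h⟩ | ⟨z, a, e, y, h⟩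
  · have hy : y = n + 1 := by
      have := w_sum n
      rw [h] at this; simpa [List.sum_append] using this
    rw [h, hy, next_dead]
    refine ⟨k, fun i hi => ?_, ?_⟩
    · rw [coord_replicate_lt hi, coord_replicate_lt hi]
    · have h1 : coord (List.replicate k 0 ++ [n+1]) k = n + 1 := by
        have := coord_append_at (List.replicate k 0) (n+1) []
        simpa using this
      have h2 : coord (List.replicate k 0 ++ n :: 2 :: List.replicate k 0) k = n := by
        have := coord_append_at (List.replicate k 0) n (2 :: List.replicate k 0)
        simpa using this
      rw [h1, h2]; omega
  · rw [h, next_eq]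
    refine ⟨z.length, fun i hi => ?_, ?_⟩
    · rw [coord_append_left hi, coord_append_left hi]
    · rw [coord_append_at, coord_append_at]; omega

lemma lexGt_w {k m : ℕ} (h : k < m) : LexGt (w k) (w m) := by
  induction m with
  | zero => omega
  | succ m ih =>
    rcases Nat.lt_or_ge k m with h' | h'
    · exact (ih h').trans (lexGt_w_succ m)
    · have : k = m := by omega
      subst this
      exact lexGt_w_succ k

lemma w_antichain {k m : ℕ} (h : k < m) : ∃ j, coord (w m) j < coord (w k) j := by
  obtain ⟨j, _, hj⟩ := lexGt_w h
  exact ⟨j, hj⟩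

/-! ### The tower functions `phi` -/

def phi : ℕ → ℕ → ℕ
  | 0, v => v
  | e+1, v => (fun x => phi e (x+2))^[v] 0

lemma phi_zero (v : ℕ) : phi 0 v = v := rfl
lemma phi_succ (e v : ℕ) : phi (e+1) v = (fun x => phi e (x+2))^[v] 0 := rfl

lemma le_iterate {f : ℕ → ℕ} (hf : ∀ z, z ≤ f z) (k a : ℕ) : a ≤ f^[k] a := by
  induction k with
  | zero => simp
  | succ k ih => rw [Function.iterate_succ_apply']; exact le_trans ih (hf _)

lemma iterate_count_mono {f : ℕ → ℕ} (hf : ∀ z, z ≤ f z) {x y : ℕ} (h : x ≤ y) (a : ℕ) :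
    f^[x] a ≤ f^[y] a := by
  obtain ⟨d, rfl⟩ := Nat.exists_eq_add_of_le h
  rw [Nat.add_comm, Function.iterate_add_apply]
  exact le_iterate hf d _

lemma phi_le : ∀ e v, v ≤ phi e v := by
  intro e
  induction e with
  | zero => intro v; simp [phi_zero]
  | succ e ih =>
    intro v
    rw [phi_succ]
    induction v with
    | zero => simp
    | succ v ihv =>
      rw [Function.iterate_succ_apply']
      calc v + 1 ≤ ((fun x => phi e (x+2))^[v] 0) + 1 := by omega
      _ ≤ phi e (((fun x => phi e (x+2))^[v] 0) + 2) := le_trans (by omega) (ih _)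

lemma phi_mono : ∀ e, Monotone (phi e) := by
  intro e
  induction e with
  | zero => intro x y h; simpa [phi_zero] using h
  | succ e ih =>
    intro x y h
    rw [phi_succ, phi_succ]
    exact iterate_count_mono (fun z => le_trans (by omega) (phi_le e (z+2))) h 0

/-! ### Basic facts about `A` -/

lemma A_step (r t : ℕ) : A (r+2) (t+2) = A (r+1) (A (r+2) (t+1)) := by
  simp only [A]
lemma A_one_right (r : ℕ) : A r 1 = 2 := by
  match r with
  | 0 => simp only [A]
  | 1 => simp only [A]
  | r+2 => simp only [A]

lemma A_one (t : ℕ) (ht : 1 ≤ t) : A 1 t = 2 * t := by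
  match t, ht with
  | 1, _ => simp only [A]
  | t+2, _ => simp only [A]

lemma A_lt : ∀ r, 1 ≤ r → ∀ t, 1 ≤ t → t < A r t := by
  intro r
  induction r with
  | zero => omega
  | succ r ihr =>
    intro _ t ht
    match r with
    | 0 =>
      rw [A_one t ht]; omega
    | r+1 =>
      induction t with
      | zero => omega
      | succ t iht =>
        match t with
        | 0 => rw [A_one_right]; omega
        | t+1 =>
          rw [A_step]
          have h1 : t + 1 < A (r+2) (t+1) := iht (by omega)
          have h2 : A (r+2) (t+1) < A (r+1) (A (r+2) (t+1)) :=
            ihr (by omega) _ (by omega)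
          omega

lemma A_lt_succ_t {r t : ℕ} (hr : 1 ≤ r) (ht : 1 ≤ t) : A r t < A r (t+1) := by
  match r with
  | 1 =>
    rw [A_one t ht, A_one (t+1) (by omega)]; omega
  | r+2 =>
    match t with
    | t'+1 =>
      rw [A_step]
      have h1 : 1 ≤ A (r+2) (t'+1) := by
        have := A_lt (r+2) (by omega) (t'+1) (by omega); omega
      exact A_lt (r+1) (by omega) _ h1

lemma A_mono_t {r t t' : ℕ} (hr : 1 ≤ r) (ht : 1 ≤ t) (h : t ≤ t') : A r t ≤ A r t' := by
  induction t' with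
  | zero => omega
  | succ u ih =>
    rcases Nat.lt_or_ge t (u+1) with h' | h'
    · have hu : 1 ≤ u := by omega
      exact le_trans (ih (by omega)) (le_of_lt (A_lt_succ_t hr hu))
    · have : t = u + 1 := by omega
      subst this; rfl

lemma A_mono_r_succ {r t : ℕ} (hr : 1 ≤ r) (ht : 1 ≤ t) : A r t ≤ A (r+1) t := by
  match t with
  | 1 => rw [A_one_right, A_one_right]
  | t+2 =>
    match r with
    | r+1 =>
      rw [A_step]
      have h1 : t + 2 ≤ A (r+2) (t+1) := A_lt (r+2) (by omega) (t+1) (by omega)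
      exact A_mono_t hr (by omega) h1

lemma A_two_mul : ∀ r, 1 ≤ r → ∀ t, 1 ≤ t → 2 * t ≤ A r t := by
  intro r
  induction r with
  | zero => omega
  | succ r ihr =>
    intro _ t ht
    match r with
    | 0 => rw [A_one t ht]
    | r+1 =>
      match t with
      | 1 => rw [A_one_right]
      | t+2 =>
        rw [A_step]
        have h1 : t + 2 ≤ A (r+2) (t+1) := A_lt (r+2) (by omega) (t+1) (by omega)
        calc 2 * (t+2) ≤ 2 * A (r+2) (t+1) := by omega
        _ ≤ A (r+1) (A (r+2) (t+1)) := ihr (by omega) _ (by omega)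

/-! ### `phi` dominates `A` -/

lemma phi_one (v : ℕ) : phi 1 v = 2 * v := by
  rw [phi_succ]
  induction v with
  | zero => simp
  | succ v ih => rw [Function.iterate_succ_apply', ih]; simp [phi_zero]; omega

lemma phi_ge_A : ∀ e, 1 ≤ e → ∀ v, 1 ≤ v → A e v ≤ phi e v := by
  intro e
  induction e with
  | zero => omega
  | succ e ihe =>
    intro _ v hv
    match e with
    | 0 => rw [phi_one, A_one v hv]
    | e+1 =>
      induction v with
      | zero => omega
      | succ v ihv =>
        match v with
        | 0 =>
          rw [A_one_right, phi_succ]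
          have h2 := phi_le (e+1) 2
          simp only [zero_add, Function.iterate_one]
          omega
        | v+1 =>
          have hstep : phi (e+2) (v+2) = phi (e+1) (phi (e+2) (v+1) + 2) := by
            rw [phi_succ, Function.iterate_succ_apply', ← phi_succ]
          rw [hstep, A_step]
          have h1 : A (e+2) (v+1) ≤ phi (e+2) (v+1) := ihv (by omega)
          have h2 : 1 ≤ A (e+2) (v+1) := by
            have := A_lt (e+2) (by omega) (v+1) (by omega); omega
          calc A (e+1) (A (e+2) (v+1)) ≤ phi (e+1) (A (e+2) (v+1)) := ihe (by omega) _ h2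
          _ ≤ phi (e+1) (phi (e+2) (v+1) + 2) := phi_mono (e+1) (by omega)

/-! ### The main run lemma -/

lemma run : ∀ e h z y, ∃ N X,
    next^[N] (z ++ h :: (List.replicate e 0 ++ [y]))
      = z ++ (List.replicate (e+1) 0 ++ [X]) ∧
    (fun x => phi e (x+2))^[h] y ≤ X := by
  intro e
  induction e with
  | zero =>
    intro h
    induction h with
    | zero =>
      intro z y
      refine ⟨0, y, ?_, le_refl _⟩
      simp [List.replicate_succ]
    | succ h ih =>
      intro z y
      obtain ⟨N, X, hit, hX⟩ := ih z (y+2)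
      refine ⟨N + 1, X, ?_, ?_⟩
      · rw [Function.iterate_add_apply, Function.iterate_one]
        have hnext : next (z ++ (h+1) :: (List.replicate 0 0 ++ [y]))
            = z ++ h :: (List.replicate 0 0 ++ [y+2]) := by
          have := next_eq z h 0 y
          simpa using this
        rw [hnext]
        exact hit
      · rw [Function.iterate_succ_apply]
        exact hX
  | succ e ihe =>
    intro h
    induction h with
    | zero =>
      intro z y
      refine ⟨0, y, ?_, le_refl _⟩
      simp [List.replicate_succ]
    | succ h ih =>
      intro z y
      -- one step
      have hnext : next (z ++ (h+1) :: (List.replicate (e+1) 0 ++ [y]))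
          = (z ++ [h]) ++ ((y+2) :: (List.replicate e 0 ++ [0])) := by
        rw [next_eq z h (e+1) y]
        simp [List.replicate_succ' (n := e)]
      obtain ⟨N₁, X₁, hit₁, hX₁⟩ := ihe (y+2) (z ++ [h]) 0
      obtain ⟨N₂, X, hit₂, hX₂⟩ := ih z X₁
      refine ⟨N₂ + (N₁ + 1), X, ?_, ?_⟩
      · rw [Function.iterate_add_apply, Function.iterate_add_apply,
          Function.iterate_one, hnext]
        have hmid : next^[N₁] ((z ++ [h]) ++ ((y+2) :: (List.replicate e 0 ++ [0])))
            = z ++ h :: (List.replicate (e+1) 0 ++ [X₁]) := by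
          rw [hit₁]; simp
        rw [hmid]
        exact hit₂
      · have hfy : (fun x => phi (e+1) (x+2)) y ≤ X₁ := by
          have : phi (e+1) (y+2) = (fun x => phi e (x+2))^[y+2] 0 := phi_succ e (y+2)
          simpa [this] using hX₁
        calc (fun x => phi (e+1) (x+2))^[h+1] y
            = (fun x => phi (e+1) (x+2))^[h] ((fun x => phi (e+1) (x+2)) y) :=
              Function.iterate_succ_apply _ _ _
        _ ≤ (fun x => phi (e+1) (x+2))^[h] X₁ := by
            refine Monotone.iterate ?_ h hfy
            intro a b hab
            exact phi_mono (e+1) (by omega)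
        _ ≤ X := hX₂

/-! ### From death to death -/

lemma w_add (a b : ℕ) : w (a + b) = next^[b] (w a) := by
  rw [w, w, Nat.add_comm, Function.iterate_add_apply]

lemma death_step (j n x : ℕ) (hw : w n = List.replicate (j+1) 0 ++ [x+1]) :
    ∃ n' X, n < n' ∧ w n' = List.replicate (2*(j+1)+1) 0 ++ [X] ∧
      phi (j+2) (x+1) ≤ X := by
  have h1 : w (n+1) = (List.replicate (j+1) 0 ++ [x]) ++ (2 :: (List.replicate j 0 ++ [0])) := by
    rw [w_succ, hw, next_dead]
    simp [List.replicate_succ' (n := j)]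
  obtain ⟨N₁, X₁, hit₁, hX₁⟩ := run j 2 (List.replicate (j+1) 0 ++ [x]) 0
  obtain ⟨N₂, X, hit₂, hX₂⟩ := run (j+1) x (List.replicate (j+1) 0) X₁
  have h2 : w (n + 1 + N₁) = List.replicate (j+1) 0 ++ (x :: (List.replicate (j+1) 0 ++ [X₁])) := by
    rw [w_add, h1, hit₁]
    simp
  have h3 : w (n + 1 + N₁ + N₂)
      = List.replicate (j+1) 0 ++ (List.replicate (j+2) 0 ++ [X]) := by
    rw [w_add, h2, hit₂]
  refine ⟨n + 1 + N₁ + N₂, X, by omega, ?_, ?_⟩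
  · rw [h3, ← List.append_assoc, ← List.replicate_add]
    congr 2
    omega
  · -- X ≥ phi (j+2) (x+1)
    have hf0 : (fun x => phi (j+1) (x+2)) 0 ≤ X₁ := by
      have : phi (j+1) 2 = (fun x => phi j (x+2))^[2] 0 := phi_succ j 2
      simpa [this] using hX₁
    have : (fun x => phi (j+1) (x+2))^[x+1] 0 ≤ X := by
      calc (fun x => phi (j+1) (x+2))^[x+1] 0
          = (fun x => phi (j+1) (x+2))^[x] ((fun x => phi (j+1) (x+2)) 0) :=
            Function.iterate_succ_apply _ _ _
      _ ≤ (fun x => phi (j+1) (x+2))^[x] X₁ := by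
          refine Monotone.iterate ?_ x hf0
          intro a b hab
          exact phi_mono (j+1) (by omega)
      _ ≤ X := hX₂
    calc phi (j+2) (x+1) = (fun x => phi (j+1) (x+2))^[x+1] 0 := phi_succ (j+1) (x+1)
    _ ≤ X := this

/-! ### `ackFn` and `invAck` -/

lemma ackFn_lt_succ (t : ℕ) : ackFn t < ackFn (t+1) := by
  match t with
  | 0 =>
    show A 0 0 < A 1 1
    rw [A_one_right]
    simp only [A]
    omega
  | t+1 =>
    calc ackFn (t+1) = A (t+1) (t+1) := rfl
    _ < A (t+1) (t+2) := A_lt_succ_t (by omega) (by omega)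
    _ ≤ A (t+2) (t+2) := A_mono_r_succ (by omega) (by omega)

lemma ackFn_strictMono : StrictMono ackFn :=
  strictMono_nat_of_lt_succ ackFn_lt_succ

lemma ackFn_ge_self (n : ℕ) : n ≤ ackFn n := by
  match n with
  | 0 => simp [ackFn, A]
  | n+1 => exact le_of_lt (A_lt (n+1) (by omega) (n+1) (by omega))

lemma invAck_spec (n : ℕ) : n ≤ ackFn (invAck n) :=
  Nat.sInf_mem (⟨n, ackFn_ge_self n⟩ : Set.Nonempty {t | n ≤ ackFn t})

lemma lt_invAck {s n : ℕ} (h : ackFn s < n) : s < invAck n := by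
  by_contra hc
  push_neg at hc
  have := ackFn_strictMono.monotone hc
  have := invAck_spec n
  omega

lemma invAck_pos {n : ℕ} (h : 1 ≤ n) : 1 ≤ invAck n := by
  have : ackFn 0 < n := by simp [ackFn, A]; omega
  exact lt_invAck this

/-! ### The chain of deaths -/

def Dfull (r n : ℕ) : Prop :=
  w n = List.replicate (2^(r+2) - 1) 0 ++ [n+1] ∧ ackFn (2^(r+1)) ≤ n + 1

lemma Dfull_zero : Dfull 0 11 := by
  constructor
  · show w 11 = [0, 0, 0, 12]
    decide
  · show ackFn 2 ≤ 12
    rw [show ackFn 2 = 4 from by rw [ackFn, A_step 0 0, A_one_right, A_one 2 (by omega)]]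
    omega

lemma Dfull_step {r n : ℕ} (h : Dfull r n) : ∃ n', n < n' ∧ Dfull (r+1) n' := by
  obtain ⟨hw, hack⟩ := h
  have hpow : 4 ≤ 2^(r+2) := by
    calc (4:ℕ) = 2^2 := rfl
    _ ≤ 2^(r+2) := Nat.pow_le_pow_right (by omega) (by omega)
  have hj : 2^(r+2) - 1 = (2^(r+2) - 2) + 1 := by omega
  obtain ⟨n', X, hlt, hw', hX⟩ := death_step (2^(r+2) - 2) n n (by rw [hw, hj])
  have hcount : 2*((2^(r+2) - 2)+1)+1 = 2^(r+1+2) - 1 := by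
    have : 2^(r+1+2) = 2 * 2^(r+2) := by ring
    omega
  have hXval : X = n' + 1 := by
    have hs := w_sum n'
    rw [hw'] at hs
    simp [List.sum_append] at hs
    omega
  have hj2 : (2^(r+2) - 2) + 2 = 2^(r+2) := by omega
  rw [hj2] at hX
  have hack2 : 2^(r+2) ≤ n + 1 := by
    have h2s : 2 * 2^(r+1) ≤ ackFn (2^(r+1)) :=
      A_two_mul (2^(r+1)) (Nat.one_le_two_pow) (2^(r+1)) (Nat.one_le_two_pow)
    have : 2 * 2^(r+1) = 2^(r+2) := by ring
    omega
  refine ⟨n', hlt, ?_, ?_⟩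
  · rw [hw', hcount, hXval]
  · -- ackFn (2^(r+2)) ≤ n' + 1
    rw [← hXval]
    calc ackFn (2^(r+2)) = A (2^(r+2)) (2^(r+2)) := rfl
    _ ≤ A (2^(r+2)) (n+1) := A_mono_t Nat.one_le_two_pow Nat.one_le_two_pow hack2
    _ ≤ phi (2^(r+2)) (n+1) := phi_ge_A _ Nat.one_le_two_pow _ (by omega)
    _ ≤ X := hX

lemma cover : ∀ n, 11 ≤ n → ∃ r n₁ n₂, Dfull r n₁ ∧ Dfull (r+1) n₂ ∧ n₁ ≤ n ∧ n < n₂ := by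
  intro n hn
  induction n with
  | zero => omega
  | succ n ih =>
    rcases Nat.lt_or_ge n 11 with h11 | h11
    · have h10 : n = 10 := by omega
      subst h10
      obtain ⟨n₂, hlt, hD⟩ := Dfull_step Dfull_zero
      exact ⟨0, 11, n₂, Dfull_zero, hD, by omega, by omega⟩
    · obtain ⟨r, n₁, n₂, hD₁, hD₂, hle, hlt⟩ := ih h11
      rcases Nat.lt_or_ge (n+1) n₂ with h' | h'
      · exact ⟨r, n₁, n₂, hD₁, hD₂, by omega, h'⟩
      · have : n₂ = n + 1 := by omega
        subst this
        obtain ⟨n₃, hlt₃, hD₃⟩ := Dfull_step hD₂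
        exact ⟨r+1, n+1, n₃, hD₂, hD₃, le_refl _, hlt₃⟩

/-! ### The length bound -/

lemma w_len_bound (n : ℕ) : (w n).length ≤ 4 * invAck (n+1) ^ 3 := by
  have hone : 1 ≤ invAck (n+1) := invAck_pos (by omega)
  have hcube : invAck (n+1) ≤ invAck (n+1) ^ 3 := Nat.le_self_pow (by omega) _
  rcases Nat.lt_or_ge n 11 with h11 | h11
  · have hlen : (w n).length ≤ 4 := by
      have := w_length_mono (show n ≤ 11 by omega)
      have h11' : (w 11).length = 4 := by decide
      omega
    calc (w n).length ≤ 4 := hlen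
    _ ≤ 4 * invAck (n+1) ^ 3 := by nlinarith
  · obtain ⟨r, n₁, n₂, hD₁, hD₂, hle, hlt⟩ := cover n h11
    have hlen₂ : (w n₂).length = 2^(r+1+2) := by
      rw [hD₂.1]
      simp only [List.length_append, List.length_replicate, List.length_cons,
        List.length_nil]
      have : 1 ≤ 2^(r+1+2) := Nat.one_le_two_pow
      omega
    have hlen : (w n).length ≤ 2^(r+1+2) := by
      rw [← hlen₂]; exact w_length_mono (le_of_lt hlt)
    have hinv : 2^(r+1) ≤ invAck (n+1) := by
      have h1 : ackFn (2^(r+1)) ≤ n + 1 := le_trans hD₁.2 (by omega)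
      have h2 : ackFn (2^(r+1) - 1) < ackFn (2^(r+1)) := by
        refine ackFn_strictMono ?_
        have : 1 ≤ 2^(r+1) := Nat.one_le_two_pow
        omega
      have h3 := lt_invAck (lt_of_lt_of_le h2 h1)
      have hp : 1 ≤ 2^(r+1) := Nat.one_le_two_pow
      omega
    calc (w n).length ≤ 2^(r+1+2) := hlen
    _ = 4 * 2^(r+1) := by ring
    _ ≤ 4 * invAck (n+1) := by omega
    _ ≤ 4 * invAck (n+1)^3 := by nlinarith

/-! ### Expanding a count-vector into a list of tickets -/

def expandL : ℕ → List ℕ → List ℕ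
  | _, [] => []
  | o, c :: L => List.replicate c o ++ expandL (o+1) L

lemma expandL_length (L : List ℕ) : ∀ o, (expandL o L).length = L.sum := by
  induction L with
  | nil => intro o; rfl
  | cons c L ih => intro o; simp [expandL, ih]

lemma expandL_count_lt (L : List ℕ) : ∀ o j, j < o → (expandL o L).count j = 0 := by
  induction L with
  | nil => intro o j _; rfl
  | cons c L ih =>
    intro o j h
    simp only [expandL, List.count_append, List.count_replicate, beq_iff_eq]
    rw [if_neg (by omega), ih (o+1) j (by omega)]

lemma expandL_count (L : List ℕ) : ∀ o j, (expandL o L).count (o + j) = coord L j := by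
  induction L with
  | nil => intro o j; simp [expandL, coord]
  | cons c L ih =>
    intro o j
    simp only [expandL, List.count_append, List.count_replicate, beq_iff_eq]
    match j with
    | 0 =>
      rw [if_pos (by omega), expandL_count_lt L (o+1) (o+0) (by omega)]
      simp [coord]
    | j+1 =>
      rw [if_neg (by omega)]
      have : o + (j+1) = (o+1) + j := by omega
      rw [this, ih (o+1) j]
      simp [coord]

lemma expandL_mem (L : List ℕ) : ∀ o x, x ∈ expandL o L → x < o + L.length := by
  induction L with
  | nil => intro o x h; simp [expandL] at h
  | cons c L ih =>
    intro o x h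
    simp only [expandL, List.mem_append, List.mem_replicate] at h
    rcases h with ⟨_, rfl⟩ | h
    · simp
    · have := ih (o+1) x h
      simp only [List.length_cons]
      omega

/-- The ticket list for dataset size `n+1`. -/
def E (n : ℕ) : List ℕ := expandL 0 (w n)

lemma E_length (n : ℕ) : (E n).length = n + 1 := by rw [E, expandL_length, w_sum]

lemma E_count (n j : ℕ) : (E n).count j = coord (w n) j := by
  have := expandL_count (w n) 0 j
  simpa [E] using this

lemma E_mem {n x : ℕ} (h : x ∈ E n) : x < (w n).length := by
  have := expandL_mem (w n) 0 x h
  simpa using this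

/-- ticket assignment -/
def tkF (m : ℕ) (i : Fin m) : ℕ := (E (m-1)).getD i.val 0

/-- full ticket multiset for dataset size `k` (junk at `k = 0`). -/
def fullM (k : ℕ) : Multiset ℕ := ↑(E (k-1))

/-- the unlearning map -/
def unlearnF (M : Multiset ℕ) (b : Bool) : Bool :=
  if b then (if 0 < Multiset.card M ∧ M = fullM (Multiset.card M) then false else true)
  else false

lemma tkF_lt {m : ℕ} (i : Fin m) : tkF m i < 4 * invAck m ^ 3 := by
  have hm : 1 ≤ m := i.pos
  have hi : i.val < (E (m-1)).length := by
    rw [E_length]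
    omega
  have hmem : tkF m i ∈ E (m-1) := by
    rw [tkF, List.getD_eq_getElem _ _ hi]
    exact List.getElem_mem hi
  have h1 := E_mem hmem
  have h2 := w_len_bound (m-1)
  have : m - 1 + 1 = m := by omega
  rw [this] at h2
  omega

lemma univ_map_tk (k : ℕ) : (Finset.univ.val.map (tkF (k+1))) = (↑(E k) : Multiset ℕ) := by
  have hlen : (E k).length = k + 1 := E_length k
  have hofn : List.ofFn (fun i : Fin (k+1) => (E k).getD i.val 0) = E k := by
    refine List.ext_getElem (by simpa using hlen.symm) ?_
    intro n h1 h2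
    simp only [List.getElem_ofFn]
    rw [List.getD_eq_getElem _ _ (by omega)]
  calc (Finset.univ.val.map (tkF (k+1)))
      = ↑(List.ofFn (fun i : Fin (k+1) => (E k).getD i.val 0)) := by
        rw [← Fin.univ_val_map]
        rfl
  _ = (↑(E k) : Multiset ℕ) := by rw [hofn]

/-- **Theorem (TiLU scheme for Count-to-Zero).** There is a ticketed learning–unlearning
scheme for Count-to-Zero with a one-bit auxiliary value and tickets that are symbols
from an alphabet of size at most `c · α⁻¹(m)³` (hence of bit-size `O(log α⁻¹(m))`):
for every `m`, the learner assigns an auxiliary bit `aux m` and tickets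
`tk m 1, …, tk m m`, and there is an unlearning map taking the multiset of presented
tickets and the auxiliary bit, which on the request `I ⊆ [m]` returns `⊥` (`false`)
if `I = [m]` and `⊤` (`true`) if `I ⊊ [m]`; in particular on the empty request it
returns `⊥` exactly when `m = 0`. -/
theorem ctz_ticketed_scheme :
    ∃ c : ℕ, 0 < c ∧
      ∃ (aux : ℕ → Bool) (tk : (m : ℕ) → Fin m → ℕ)
        (Unlearn : Multiset ℕ → Bool → Bool),
        (∀ (m : ℕ) (i : Fin m), tk m i < c * invAck m ^ 3) ∧
        (∀ (m : ℕ) (I : Finset (Fin m)),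
          Unlearn (I.val.map (tk m)) (aux m) =
            if I = (Finset.univ : Finset (Fin m)) then false else true) := by
  refine ⟨4, by omega, fun m => decide (m ≠ 0), tkF, unlearnF, fun m i => tkF_lt i, ?_⟩
  intro m I
  match m with
  | 0 =>
    have hI : I = (Finset.univ : Finset (Fin 0)) := Subsingleton.elim _ _
    simp [hI, unlearnF]
  | k+1 =>
    show unlearnF (Multiset.map (tkF (k+1)) I.val) (decide (k+1 ≠ 0)) = _
    rw [show (decide (k+1 ≠ 0)) = true by simp]
    by_cases hI : I = (Finset.univ : Finset (Fin (k+1)))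
    · subst hI
      rw [if_pos rfl, univ_map_tk k]
      have hcard : Multiset.card (↑(E k) : Multiset ℕ) = k + 1 := by
        simp [E_length]
      rw [unlearnF, if_pos rfl]
      rw [if_pos ?_]
      constructor
      · omega
      · rw [hcard]; rfl
    · rw [if_neg hI]
      set M := I.val.map (tkF (k+1)) with hM
      have hle : M ≤ (↑(E k) : Multiset ℕ) := by
        rw [← univ_map_tk k]
        exact Multiset.map_le_map (by
          rw [Finset.val_le_iff]
          exact Finset.subset_univ I)
      have hcard : Multiset.card M = I.card := by
        rw [hM, Multiset.card_map]; rfl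
      have hcardlt : I.card < k + 1 := by
        have := Finset.card_lt_card ((Finset.subset_univ I).ssubset_of_ne hI)
        simpa using this
      rw [unlearnF, if_pos rfl]
      rw [if_neg ?_]
      rintro ⟨hpos, heq⟩
      -- card M = j+1 with j < k
      obtain ⟨j, hj⟩ : ∃ j, Multiset.card M = j + 1 := ⟨Multiset.card M - 1, by omega⟩
      have hjk : j < k := by omega
      obtain ⟨a, ha⟩ := w_antichain hjk
      have h1 : Multiset.count a M ≤ Multiset.count a (↑(E k) : Multiset ℕ) :=
        Multiset.count_le_of_le a hle
      have h2 : Multiset.count a M = coord (w j) a := by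
        rw [heq, hj]
        show Multiset.count a (↑(E ((j+1)-1)) : Multiset ℕ) = coord (w j) a
        simp [Multiset.coe_count, E_count]
      have h3 : Multiset.count a (↑(E k) : Multiset ℕ) = coord (w k) a := by
        simp [Multiset.coe_count, E_count]
      omega
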